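/- Let H be a complex Hilbert space, V a balanced set of unit vectors separating points of H, K the norm-closed convex hull in B(H)_* of {ω_{ξ,η} : ξ, η ∈ V}, p a nonzero orthogonal projection and λ ≥ 1 such that p is compatible with (V, λ). With μ := sup{r ≥ 1 : r·pV ⊂ B₁(H)}, every normal functional ψ on B(pH) (viewed on B(H) via ψ(x) = ψ(pxp)) satisfies q_{K_{p,λ}}(ψ) ≤ (1/μ²) · q_K(ψ). -/

import Mathlib

noncomputable section

open scoped InnerProductSpace ENNReal Pointwise

/-- The vector functional `ω_{ξ,η}` on `B(H)` given by `x ↦ ⟨xξ, η⟩`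
(linear in `x`; in Mathlib's convention this is `⟪η, x ξ⟫_ℂ`). -/
def omegaFunctional {H : Type*} [NormedAddCommGroup H] [InnerProductSpace ℂ H]
    (ξ η : H) : (H →L[ℂ] H) →L[ℂ] ℂ :=
  (innerSL ℂ η).comp (ContinuousLinearMap.apply ℂ H ξ)

/-- A continuous linear functional on `B(H)` is *normal* if it lies in the norm closure of the
linear span of the vector functionals (this is the predual `B(H)_*`, i.e. the trace-class
induced functionals). -/
def IsNormalFunctional {H : Type*} [NormedAddCommGroup H] [InnerProductSpace ℂ H]
    (ψ : (H →L[ℂ] H) →L[ℂ] ℂ) : Prop :=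
  ψ ∈ closure (Submodule.span ℂ {φ : (H →L[ℂ] H) →L[ℂ] ℂ | ∃ ξ η : H, φ = omegaFunctional ξ η} :
    Set ((H →L[ℂ] H) →L[ℂ] ℂ))

/-- A *normal state* on `B(H)`: a positive normal functional of norm one. -/
def IsNormalState {H : Type*} [NormedAddCommGroup H] [InnerProductSpace ℂ H] [CompleteSpace H]
    (φ : (H →L[ℂ] H) →L[ℂ] ℂ) : Prop :=
  IsNormalFunctional φ ∧ ‖φ‖ = 1 ∧
    ∀ x : H →L[ℂ] H, x.IsPositive → 0 ≤ (φ x).re ∧ (φ x).im = 0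

/-- `‖x‖_K := sup {|ψ(x)| : ψ ∈ K}`. -/
def normK {H : Type*} [NormedAddCommGroup H] [InnerProductSpace ℂ H]
    (K : Set ((H →L[ℂ] H) →L[ℂ] ℂ)) (x : H →L[ℂ] H) : ℝ :=
  sSup ((fun ψ : (H →L[ℂ] H) →L[ℂ] ℂ => ‖ψ x‖) '' K)

/-- The Minkowski functional `q_K(ψ) := inf {α ≥ 0 : ψ ∈ αK}`, with value `∞` if no
such `α` exists. -/
def qK {H : Type*} [NormedAddCommGroup H] [InnerProductSpace ℂ H]
    (K : Set ((H →L[ℂ] H) →L[ℂ] ℂ)) (ψ : (H →L[ℂ] H) →L[ℂ] ℂ) : ℝ≥0∞ :=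
  sInf {c : ℝ≥0∞ | ∃ r : ℝ, 0 ≤ r ∧ c = ENNReal.ofReal r ∧ ψ ∈ r • K}


theorem aux_smul_zero {E : Type*} [AddCommMonoid E] [Module ℝ E] (a : ℝ) :
    a • (0 : E) = 0 :=
  smul_zero a

theorem aux_smul_smul {E : Type*} [AddCommMonoid E] [Module ℝ E] (a b : ℝ) (x : E) :
    a • b • x = (a * b) • x :=
  smul_smul a b x

theorem omega_smul {H : Type*} [NormedAddCommGroup H] [InnerProductSpace ℂ H]
    (s t : ℝ) (u v : H) :
    omegaFunctional (s • u) (t • v) = (s * t) • omegaFunctional u v := by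
  ext x
  show ⟪t • v, x (s • u)⟫_ℂ = (s * t) • ⟪v, x u⟫_ℂ
  rw [RCLike.real_smul_eq_coe_smul (K := ℂ) t, RCLike.real_smul_eq_coe_smul (K := ℂ) s,
    map_smul, inner_smul_left, inner_smul_right,
    RCLike.real_smul_eq_coe_smul (K := ℂ) (s*t), smul_eq_mul, RCLike.conj_ofReal]
  push_cast
  ring

set_option maxHeartbeats 2000000 in
set_option synthInstance.maxHeartbeats 400000 in
/-- Suppose `p` is compatible with `(V, l)` and
`μ := sup {r ≥ 1 : r·pV ⊂ B₁(H)}`. Then every normal functional `ψ` on `B(pH)`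
(viewed on `B(H)` via `ψ(x) = ψ(pxp)`) satisfies `q_{K_{p,l}}(ψ) ≤ (1/μ²) · q_K(ψ)`. -/
theorem stmt7 {H : Type*} [NormedAddCommGroup H] [InnerProductSpace ℂ H] [CompleteSpace H]
    (V : Set H)
    (hunit : ∀ ξ ∈ V, ‖ξ‖ = 1)
    (hbal : ∀ ξ ∈ V, ∀ c : ℂ, ‖c‖ = 1 → c • ξ ∈ V)
    (hsep : ∀ ξ : H, (∀ η ∈ V, ⟪ξ, η⟫_ℂ = 0) → ξ = 0)
    (K : Set ((H →L[ℂ] H) →L[ℂ] ℂ))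
    (hK : K = closure (convexHull ℝ
      {φ : (H →L[ℂ] H) →L[ℂ] ℂ | ∃ ξ ∈ V, ∃ η ∈ V, φ = omegaFunctional ξ η}))
    (p : H →L[ℂ] H) (hp_idem : IsIdempotentElem p) (hp_sa : IsSelfAdjoint p) (hp_ne : p ≠ 0)
    (l : ℝ) (hl : 1 ≤ l)
    (Vp : Set H) (hVp : Vp = {ζ : H | (∃ ξ ∈ V, ζ = l • p ξ) ∧ ‖ζ‖ = 1})
    (Kp : Set ((H →L[ℂ] H) →L[ℂ] ℂ))
    (hKp : Kp = closure (convexHull ℝ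
      {φ : (H →L[ℂ] H) →L[ℂ] ℂ | ∃ ξ ∈ Vp, ∃ η ∈ Vp, φ = omegaFunctional ξ η}))
    (hcompat : ∀ ξ ∈ V, p ξ ≠ 0 → ‖p ξ‖⁻¹ • p ξ ∈ Vp)
    (μ : ℝ) (hμ : μ = sSup {r : ℝ | 1 ≤ r ∧ ∀ ξ ∈ V, ‖r • p ξ‖ ≤ 1})
    (ψ : (H →L[ℂ] H) →L[ℂ] ℂ) (hψ : IsNormalFunctional ψ)
    (hψp : ∀ x : H →L[ℂ] H, ψ x = ψ (p ∘L x ∘L p)) :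
    qK Kp ψ ≤ ENNReal.ofReal (1 / μ ^ 2) * qK K ψ := by
  classical
  -- p is self-adjoint as a map
  have hpself : ∀ ζ w : H, ⟪p ζ, w⟫_ℂ = ⟪ζ, p w⟫_ℂ := by
    intro ζ w
    conv_rhs => rw [← hp_sa.adjoint_eq]
    exact (ContinuousLinearMap.adjoint_inner_right p ζ w).symm
  have hpp : ∀ ζ : H, p (p ζ) = p ζ := by
    intro ζ
    have := congrArg (fun q : H →L[ℂ] H => q ζ) hp_idem
    simpa [IsIdempotentElem, ContinuousLinearMap.mul_apply] using this
  -- norm contraction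
  have hpnorm : ∀ ζ : H, ‖p ζ‖ ≤ ‖ζ‖ := by
    intro ζ
    by_cases h : p ζ = 0
    · simp [h]
    · have h1 : ⟪p ζ, p ζ⟫_ℂ = ⟪ζ, p ζ⟫_ℂ := by rw [hpself, hpp]
      have h2 : (‖p ζ‖ : ℝ) ^ 2 = RCLike.re ⟪p ζ, p ζ⟫_ℂ := by
        rw [← @inner_self_eq_norm_sq ℂ]
      have h3 : RCLike.re ⟪ζ, p ζ⟫_ℂ ≤ ‖⟪ζ, p ζ⟫_ℂ‖ := RCLike.re_le_norm _
      have h4 : ‖⟪ζ, p ζ⟫_ℂ‖ ≤ ‖ζ‖ * ‖p ζ‖ := norm_inner_le_norm _ _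
      have h5 : ‖p ζ‖ ^ 2 ≤ ‖ζ‖ * ‖p ζ‖ := by rw [h2, h1]; exact h3.trans h4
      have h6 : 0 < ‖p ζ‖ := norm_pos_iff.mpr h
      nlinarith
  -- some ξ₀ ∈ V with p ξ₀ ≠ 0
  have hex : ∃ ξ₀ ∈ V, p ξ₀ ≠ 0 := by
    by_contra h
    push_neg at h
    apply hp_ne
    ext ζ
    show p ζ = 0
    apply hsep
    intro η hη
    rw [hpself, h η hη, inner_zero_right]
  obtain ⟨ξ₀, hξ₀V, hξ₀⟩ := hex
  -- properties of μ
  set S : Set ℝ := {r : ℝ | 1 ≤ r ∧ ∀ ξ ∈ V, ‖r • p ξ‖ ≤ 1} with hS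
  have h1S : (1 : ℝ) ∈ S := by
    refine ⟨le_refl 1, fun ξ hξ => ?_⟩
    rw [one_smul]
    exact (hpnorm ξ).trans_eq (hunit ξ hξ)
  have hSbdd : BddAbove S := by
    refine ⟨‖p ξ₀‖⁻¹, fun r hr => ?_⟩
    have h2 := hr.2 ξ₀ hξ₀V
    have h3 : 0 < ‖p ξ₀‖ := norm_pos_iff.mpr hξ₀
    rw [norm_smul, Real.norm_eq_abs, abs_of_nonneg (le_trans zero_le_one hr.1)] at h2
    rw [inv_eq_one_div, le_div_iff₀ h3]
    exact h2
  have hμ1 : 1 ≤ μ := hμ ▸ le_csSup hSbdd h1S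
  have hμpos : 0 < μ := lt_of_lt_of_le one_pos hμ1
  have hμle : ∀ ξ ∈ V, μ * ‖p ξ‖ ≤ 1 := by
    intro ξ hξ
    by_cases h : p ξ = 0
    · simp [h]
    · have h3 : 0 < ‖p ξ‖ := norm_pos_iff.mpr h
      have : μ ≤ ‖p ξ‖⁻¹ := by
        rw [hμ]
        apply csSup_le ⟨1, h1S⟩
        intro r hr
        have h2 := hr.2 ξ hξ
        rw [norm_smul, Real.norm_eq_abs, abs_of_nonneg (le_trans zero_le_one hr.1)] at h2
        rw [← mul_le_mul_iff_of_pos_right h3, inv_mul_cancel₀ (ne_of_gt h3)]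
        exact h2
      calc μ * ‖p ξ‖ ≤ ‖p ξ‖⁻¹ * ‖p ξ‖ := by
            exact mul_le_mul_of_nonneg_right this (le_of_lt h3)
        _ = 1 := inv_mul_cancel₀ (ne_of_gt h3)
  set a : ℝ := 1 / μ ^ 2 with ha
  have hapos : 0 < a := by positivity
  -- 0 ∈ Kp
  set genp : Set ((H →L[ℂ] H) →L[ℂ] ℂ) :=
    {φ : (H →L[ℂ] H) →L[ℂ] ℂ | ∃ ξ ∈ Vp, ∃ η ∈ Vp, φ = omegaFunctional ξ η} with hgenp
  have hKpconv : Convex ℝ Kp := by rw [hKp]; exact (convex_convexHull ℝ genp).closure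
  have hKpclosed : IsClosed Kp := by rw [hKp]; exact isClosed_closure
  have hζ : ‖p ξ₀‖⁻¹ • p ξ₀ ∈ Vp := hcompat ξ₀ hξ₀V hξ₀
  set ζ : H := ‖p ξ₀‖⁻¹ • p ξ₀ with hζdef
  have hnegζ : -ζ ∈ Vp := by
    rw [hVp] at hζ ⊢
    obtain ⟨⟨ξ₁, hξ₁V, hz⟩, hn⟩ := hζ
    refine ⟨⟨(-1 : ℂ) • ξ₁, hbal ξ₁ hξ₁V (-1) (by simp), ?_⟩, by simp [hn]⟩
    rw [map_smul, smul_comm, hz]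
    simp
  have h0Kp : (0 : (H →L[ℂ] H) →L[ℂ] ℂ) ∈ Kp := by
    have h1 : omegaFunctional ζ ζ ∈ genp := ⟨ζ, hζ, ζ, hζ, rfl⟩
    have h2 : omegaFunctional (-ζ) ζ ∈ genp := ⟨-ζ, hnegζ, ζ, hζ, rfl⟩
    have h3 : omegaFunctional (-ζ) ζ = -omegaFunctional ζ ζ := by
      ext x; simp [omegaFunctional]
    have h4 := (convex_convexHull ℝ genp) (subset_convexHull ℝ genp h1)
      (subset_convexHull ℝ genp h2) (by norm_num : (0:ℝ) ≤ (1:ℝ)/2)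
      (by norm_num : (0:ℝ) ≤ (1:ℝ)/2) (by norm_num)
    rw [hKp]
    apply subset_closure
    convert h4 using 1
    rw [h3, smul_neg]
    abel
  -- the compression map T
  set M : (H →L[ℂ] H) →L[ℂ] (H →L[ℂ] H) :=
    ((ContinuousLinearMap.compL ℂ H H H) p).comp
      ((ContinuousLinearMap.compL ℂ H H H).flip p) with hMdef
  have hM : ∀ x : H →L[ℂ] H, M x = p ∘L x ∘L p := by
    intro x
    ext w
    simp [hMdef]
  set T : ((H →L[ℂ] H) →L[ℂ] ℂ) →L[ℂ] ((H →L[ℂ] H) →L[ℂ] ℂ) :=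
    (ContinuousLinearMap.compL ℂ (H →L[ℂ] H) (H →L[ℂ] H) ℂ).flip M with hTdef
  have hT : ∀ (φ : (H →L[ℂ] H) →L[ℂ] ℂ) (x : H →L[ℂ] H), T φ x = φ (p ∘L x ∘L p) := by
    intro φ x
    show φ (M x) = φ (p ∘L x ∘L p)
    rw [hM]
  have hTψ : T ψ = ψ := by
    ext x
    rw [hT]
    exact (hψp x).symm
  have hTomega : ∀ ξ η : H, T (omegaFunctional ξ η) = omegaFunctional (p ξ) (p η) := by
    intro ξ η
    ext x
    rw [hT]
    show ⟪η, (p ∘L x ∘L p) ξ⟫_ℂ = ⟪p η, x (p ξ)⟫_ℂ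
    rw [hpself]
    rfl
  -- generators of K map into a • Kp
  set genK : Set ((H →L[ℂ] H) →L[ℂ] ℂ) :=
    {φ : (H →L[ℂ] H) →L[ℂ] ℂ | ∃ ξ ∈ V, ∃ η ∈ V, φ = omegaFunctional ξ η} with hgenK
  have hgen : ∀ φ ∈ genK, T φ ∈ a • Kp := by
    rintro φ ⟨ξ, hξ, η, hη, rfl⟩
    rw [hTomega]
    by_cases h1 : p ξ = 0
    · have : omegaFunctional (p ξ) (p η) = 0 := by
        rw [h1]; ext x; simp [omegaFunctional]
      rw [this]
      exact ⟨0, h0Kp, aux_smul_zero a⟩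
    by_cases h2 : p η = 0
    · have : omegaFunctional (p ξ) (p η) = 0 := by
        rw [h2]; ext x; simp [omegaFunctional]
      rw [this]
      exact ⟨0, h0Kp, aux_smul_zero a⟩
    have hs : 0 < ‖p ξ‖ := norm_pos_iff.mpr h1
    have ht : 0 < ‖p η‖ := norm_pos_iff.mpr h2
    have hξ' : ‖p ξ‖⁻¹ • p ξ ∈ Vp := hcompat ξ hξ h1
    have hη' : ‖p η‖⁻¹ • p η ∈ Vp := hcompat η hη h2
    set ξ' : H := ‖p ξ‖⁻¹ • p ξ
    set η' : H := ‖p η‖⁻¹ • p η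
    have heξ : p ξ = ‖p ξ‖ • ξ' := by
      rw [smul_smul, mul_inv_cancel₀ (ne_of_gt hs), one_smul]
    have heη : p η = ‖p η‖ • η' := by
      rw [smul_smul, mul_inv_cancel₀ (ne_of_gt ht), one_smul]
    have homega : omegaFunctional (p ξ) (p η)
        = (‖p ξ‖ * ‖p η‖) • omegaFunctional ξ' η' := by
      conv_lhs => rw [heξ, heη, omega_smul]
    set c : ℝ := μ ^ 2 * (‖p ξ‖ * ‖p η‖) with hc
    have hc0 : 0 ≤ c := by positivity
    have hc1 : c ≤ 1 := by
      have hx := hμle ξ hξ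
      have hy := hμle η hη
      have h12 : (μ * ‖p ξ‖) * (μ * ‖p η‖) ≤ 1 * 1 :=
        mul_le_mul hx hy (by positivity) zero_le_one
      calc c = (μ * ‖p ξ‖) * (μ * ‖p η‖) := by rw [hc]; ring
        _ ≤ 1 := by simpa using h12
    have hω'Kp : omegaFunctional ξ' η' ∈ Kp := by
      rw [hKp]
      exact subset_closure (subset_convexHull ℝ genp ⟨ξ', hξ', η', hη', rfl⟩)
    have hmem : c • omegaFunctional ξ' η' ∈ Kp := by
      have h5 := hKpconv hω'Kp h0Kp hc0 (by linarith : (0:ℝ) ≤ 1 - c) (by ring)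
      rw [aux_smul_zero, add_zero] at h5
      exact h5
    refine ⟨c • omegaFunctional ξ' η', hmem, ?_⟩
    show a • (c • omegaFunctional ξ' η') = omegaFunctional (p ξ) (p η)
    rw [homega]
    have hac : a * c = ‖p ξ‖ * ‖p η‖ := by
      rw [ha, hc]
      field_simp
    calc a • c • omegaFunctional ξ' η' = (a * c) • omegaFunctional ξ' η' :=
          aux_smul_smul (E := (H →L[ℂ] H) →L[ℂ] ℂ) a c (omegaFunctional ξ' η')
      _ = (‖p ξ‖ * ‖p η‖) • omegaFunctional ξ' η' := by rw [hac]
  -- K ⊆ T ⁻¹' (a • Kp)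
  have haKpclosed : IsClosed (a • Kp) := hKpclosed.smul_of_ne_zero (ne_of_gt hapos)
  have haKpconv : Convex ℝ (a • Kp) := hKpconv.smul a
  have hKsub : K ⊆ T ⁻¹' (a • Kp) := by
    rw [hK]
    apply closure_minimal
    · apply convexHull_min hgen
      exact haKpconv.linear_preimage ((T.restrictScalars ℝ).toLinearMap)
    · exact haKpclosed.preimage T.continuous
  -- main inequality
  have key : ∀ r : ℝ, 0 ≤ r → ψ ∈ r • K → ψ ∈ (r * a) • Kp := by
    intro r hr ⟨φ, hφK, hφeq⟩
    have h1 : T φ ∈ a • Kp := hKsub hφK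
    obtain ⟨φ'', hφ'', hφ''eq⟩ := h1
    have hφ''eq' : a • φ'' = T φ := hφ''eq
    have hTr : T (r • φ) = r • T φ := by
      ext x
      show (r • φ) (M x) = (r • T φ) x
      rw [ContinuousLinearMap.smul_apply, ContinuousLinearMap.smul_apply]
      rfl
    refine ⟨φ'', hφ'', ?_⟩
    show (r * a) • φ'' = ψ
    rw [← hTψ, ← hφeq, hTr, ← hφ''eq']
    exact (aux_smul_smul r a φ'').symm
  -- finish
  rw [qK, qK, mul_comm]
  have ha0 : ENNReal.ofReal a ≠ 0 := ne_of_gt (ENNReal.ofReal_pos.mpr hapos)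
  rw [← ENNReal.div_le_iff_le_mul (Or.inl ha0) (Or.inl ENNReal.ofReal_ne_top)]
  apply le_sInf
  rintro b ⟨r, hr, rfl, hmem⟩
  rw [ENNReal.div_le_iff_le_mul (Or.inl ha0) (Or.inl ENNReal.ofReal_ne_top)]
  have : ENNReal.ofReal r * ENNReal.ofReal a = ENNReal.ofReal (r * a) :=
    (ENNReal.ofReal_mul hr).symm
  rw [this]
  exact sInf_le ⟨r * a, mul_nonneg hr hapos.le, rfl, key r hr hmem⟩
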